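/- Proposition 1 (sharp identification in GLM): Fix an agent i ∈ 𝒜 and a vector v ∈ Δ(X). There exist, for each N ∈ 𝒩_i, reals π_i^N(j) ≥ 0 (j ∈ N) with π_i^N(i) > 0 and Σ_{j∈N} π_i^N(j) = 1 such that p_i^N = π_i^N(i)·v + Σ_{j∈N∖{i}} π_i^N(j)·p_j^N for every N ∈ 𝒩_i, if and only if v ∈ ⋂_{N∈𝒩_i} co⁻¹(Δ(p^N), p_i^N). Equivalently, the sharp identified set for v_i in GLM equals ⋂_{N∈𝒩_i} co⁻¹(Δ(p^N), p_i^N). -/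

import Mathlib

open Finset
open scoped Classical

noncomputable section

/-- The simplex Δ(X) of probability vectors on a finite set X. -/
def simplex (X : Type*) [Fintype X] : Set (X → ℝ) :=
  {v | (∀ x, 0 ≤ v x) ∧ (∑ x, v x) = 1}

/-- The inverse cone co⁻¹(Δ(p^N), p_i^N). -/
def invCone {X A : Type*} [Fintype X] [DecidableEq A]
    (p : Finset A → A → X → ℝ) (N : Finset A) (i : A) : Set (X → ℝ) :=
  {v | v ∈ simplex X ∧ ∃ γ : A → ℝ, (∀ j ∈ N.erase i, γ j ≤ 0) ∧
    (∑ j ∈ N, γ j) = 1 ∧ v = ∑ j ∈ N, γ j • p N j}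

/-- Proposition 1: the sharp identified set for agent i's ideal point in GLM is
⋂_{N ∈ 𝒩_i} co⁻¹(Δ(p^N), p_i^N). -/
theorem glm_sharp_identification
    {X A : Type*} [Fintype X] [Fintype A] [DecidableEq A]
    (hX : 2 ≤ Fintype.card X) (hA : 2 ≤ Fintype.card A)
    (𝒩 : Finset (Finset A)) (h𝒩 : 𝒩.Nonempty) (h𝒩' : ∀ N ∈ 𝒩, N.Nonempty)
    (p : Finset A → A → X → ℝ) (hp : ∀ N ∈ 𝒩, ∀ i ∈ N, p N i ∈ simplex X)
    (i : A) (v : X → ℝ) (hv : v ∈ simplex X) :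
    (∀ N ∈ 𝒩.filter (fun N => i ∈ N), ∃ π : A → ℝ,
        (∀ j ∈ N, 0 ≤ π j) ∧ 0 < π i ∧ (∑ j ∈ N, π j) = 1 ∧
        p N i = π i • v + ∑ j ∈ N.erase i, π j • p N j) ↔
      v ∈ ⋂ N ∈ 𝒩.filter (fun N => i ∈ N), invCone p N i := by
  simp only [Set.mem_iInter]
  constructor
  · intro h N hN
    obtain ⟨π, hπ0, hπi, hπsum, hπeq⟩ := h N hN
    have hiN : i ∈ N := (Finset.mem_filter.mp hN).2
    have hne : π i ≠ 0 := ne_of_gt hπi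
    set γ : A → ℝ := fun j => if j = i then 1 / π i else -(π j) / π i with hγdef
    have hγi : γ i = 1 / π i := if_pos rfl
    have hγj : ∀ j ∈ N.erase i, γ j = -(π j) / π i := by
      intro j hj
      exact if_neg (Finset.ne_of_mem_erase hj)
    have hsum_erase : ∑ j ∈ N.erase i, π j = 1 - π i := by
      have h1 := Finset.add_sum_erase N π hiN
      linarith [hπsum]
    refine ⟨hv, γ, ?_, ?_, ?_⟩
    · intro j hj
      rw [hγj j hj, neg_div, neg_nonpos]
      exact div_nonneg (hπ0 j (Finset.mem_of_mem_erase hj)) hπi.le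
    · rw [← Finset.add_sum_erase N γ hiN, hγi, Finset.sum_congr rfl hγj]
      have hS : ∑ x ∈ N.erase i, -π x / π i = -(1 - π i) / π i := by
        rw [← Finset.sum_div, Finset.sum_neg_distrib, hsum_erase]
      rw [hS]
      field_simp
      ring
    · funext x
      have hx := congrFun hπeq x
      simp only [Pi.add_apply, Pi.smul_apply, Finset.sum_apply, smul_eq_mul] at hx ⊢
      rw [← Finset.add_sum_erase N _ hiN, hγi]
      have h2 : ∑ j ∈ N.erase i, γ j * p N j x
          = -(1 / π i) * ∑ j ∈ N.erase i, π j * p N j x := by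
        rw [Finset.mul_sum]
        refine Finset.sum_congr rfl fun j hj => ?_
        rw [hγj j hj]; ring
      rw [h2, hx]
      field_simp
      ring
  · intro h N hN
    obtain ⟨_, γ, hγ0, hγsum, hγeq⟩ := h N hN
    have hiN : i ∈ N := (Finset.mem_filter.mp hN).2
    have hsum_erase : ∑ j ∈ N.erase i, γ j = 1 - γ i := by
      have h1 := Finset.add_sum_erase N γ hiN
      linarith [hγsum]
    have hγipos : 0 < γ i := by
      have hle : ∑ j ∈ N.erase i, γ j ≤ 0 := Finset.sum_nonpos hγ0
      linarith
    have hne : γ i ≠ 0 := ne_of_gt hγipos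
    set π : A → ℝ := fun j => if j = i then 1 / γ i else -(γ j) / γ i with hπdef
    have hπi : π i = 1 / γ i := if_pos rfl
    have hπj : ∀ j ∈ N.erase i, π j = -(γ j) / γ i := by
      intro j hj
      exact if_neg (Finset.ne_of_mem_erase hj)
    refine ⟨π, fun j hj => ?_, ?_, ?_, ?_⟩
    · rcases eq_or_ne j i with rfl | hji
      · rw [hπi]; positivity
      · have hj' : j ∈ N.erase i := Finset.mem_erase.mpr ⟨hji, hj⟩
        rw [hπj j hj', neg_div, neg_nonneg]
        exact div_nonpos_of_nonpos_of_nonneg (hγ0 j hj') hγipos.le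
    · rw [hπi]; positivity
    · rw [← Finset.add_sum_erase N π hiN, hπi, Finset.sum_congr rfl hπj]
      have hS : ∑ x ∈ N.erase i, -γ x / γ i = -(1 - γ i) / γ i := by
        rw [← Finset.sum_div, Finset.sum_neg_distrib, hsum_erase]
      rw [hS]
      field_simp
      ring
    · funext x
      have hx := congrFun hγeq x
      simp only [Pi.add_apply, Pi.smul_apply, Finset.sum_apply, smul_eq_mul] at hx ⊢
      rw [← Finset.add_sum_erase N _ hiN] at hx
      have h2 : ∑ j ∈ N.erase i, π j * p N j x
          = -(1 / γ i) * ∑ j ∈ N.erase i, γ j * p N j x := by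
        rw [Finset.mul_sum]
        refine Finset.sum_congr rfl fun j hj => ?_
        rw [hπj j hj]; ring
      rw [hπi, h2]
      field_simp
      have h3 := Finset.add_sum_erase N (fun j => γ j * p N j x) hiN
      linarith [hx, h3]
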